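/- Let F be a field of positive characteristic p and V a finite-dimensional F-vector space. Then every abelian regular subgroup of Aff(V) is a p-group of finite exponent; its exponent is a power of p. -/

import Mathlib

open Polynomial in
lemma aux_geom (F : Type*) [Field F] (p : ℕ) [Fact p.Prime] [CharP F p] (m : ℕ) :
    (∑ i ∈ Finset.range (p ^ m), (1 + X : F[X]) ^ i) = X ^ (p ^ m - 1) := by
  have h1 : (∑ i ∈ Finset.range (p ^ m), (1 + X : F[X]) ^ i) * X
      = X ^ (p ^ m - 1) * X := by
    have h := geom_sum_mul (1 + X : F[X]) (p ^ m)
    rw [add_sub_cancel_left] at h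
    rw [h, add_pow_char_pow, one_pow, add_sub_cancel_left, ← pow_succ,
      Nat.sub_add_cancel (Nat.one_le_pow _ _ (Fact.out : p.Prime).pos)]
  exact mul_right_cancel₀ Polynomial.X_ne_zero h1

lemma aux_pow_finrank {F V : Type*} [Field F] [AddCommGroup V] [Module F V]
    [FiniteDimensional F V] {φ : Module.End F V} (h : IsNilpotent φ) :
    φ ^ (Module.finrank F V) = 0 := by
  have h2 := h.charpoly_eq_X_pow_finrank
  have h3 := φ.aeval_self_charpoly
  rw [h2] at h3
  simpa only [map_pow, Polynomial.aeval_X] using h3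

lemma aux_nilpotent {F V : Type*} [Field F] [AddCommGroup V] [Module F V]
    [FiniteDimensional F V] (L : V → Module.End F V)
    (hcomm : ∀ v w, L v w = L w v)
    (hassoc : ∀ v w, L (L v w) = L v * L w)
    (hquasi : ∀ v, ∃ w, v + w + L v w = 0) (v : V) :
    IsNilpotent (L v) := by
  by_contra hnil
  have hpow : ∀ k, (L v) ^ k ≠ 0 := fun k hk => hnil ⟨k, hk⟩
  have hL0 : L 0 = 0 := by
    ext b; rw [hcomm]; simp
  -- every idempotent is zero
  have hidem : ∀ e : V, L e e = e → e = 0 := by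
    intro e he
    obtain ⟨w, hw⟩ := hquasi (-e)
    have hLneg : L (-e) w = - L e w := by
      rw [hcomm, map_neg, hcomm]
    rw [hLneg] at hw
    have h2 := congrArg (L e) hw
    have hee : L e (L e w) = L e w := by
      have h3 := hassoc e e
      rw [he] at h3
      calc L e (L e w) = (L e * L e) w := rfl
        _ = L e w := by rw [← h3]
    rw [map_zero, map_add, map_add, map_neg, map_neg, he, hee] at h2
    have : -e = 0 := by abel_nf at h2 ⊢; linear_combination (norm := abel) h2
    simpa using this
  -- powers as left multiplications
  have hLpow : ∀ k : ℕ, L (((L v) ^ k) v) = (L v) ^ (k + 1) := by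
    intro k
    induction k with
    | zero => simp
    | succ k ih =>
      have : ((L v) ^ (k + 1)) v = L v (((L v) ^ k) v) := by
        rw [pow_succ']; rfl
      rw [this, hassoc, ih, ← pow_succ']
  have hLpowgen : ∀ (k : ℕ) (x : V), L (((L v) ^ (k + 1)) x) = (L v) ^ (k + 1) * L x := by
    intro k
    induction k with
    | zero =>
      intro x
      have h1 : ((L v) ^ 1) x = L v x := by simp
      rw [h1, hassoc]; simp
    | succ k ih =>
      intro x
      have h1 : ((L v) ^ (k + 1 + 1)) x = L v (((L v) ^ (k + 1)) x) := by
        rw [pow_succ']; rfl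
      rw [h1, hassoc, ih, ← mul_assoc, ← pow_succ']
  -- range chain
  set S : ℕ → Submodule F V := fun k => LinearMap.range ((L v) ^ k) with hS
  have hSmap : ∀ k, S (k + 1) = Submodule.map (L v) (S k) := by
    intro k
    rw [hS]
    simp only
    rw [pow_succ', Module.End.mul_eq_comp, LinearMap.range_comp]
  have hSanti : ∀ k, S (k + 1) ≤ S k := by
    intro k
    rw [hS]; simp only
    rw [pow_succ, Module.End.mul_eq_comp, LinearMap.range_comp]
    exact LinearMap.map_le_range
  set r : ℕ → ℕ := fun k => Module.finrank F (S k) with hr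
  have hranti : ∀ k, r (k + 1) ≤ r k := fun k => Submodule.finrank_mono (hSanti k)
  have hm : ∃ m, r (m + 1) = r m := by
    by_contra hc
    push_neg at hc
    have hlt : ∀ k, r (k + 1) < r k := fun k => lt_of_le_of_ne (hranti k) (hc k)
    have hsum : ∀ k, r k + k ≤ r 0 := by
      intro k
      induction k with
      | zero => simp
      | succ k ih => have := hlt k; omega
    have := hsum (r 0 + 1); omega
  obtain ⟨m, hm⟩ := hm
  have hSm : S (m + 1) = S m := Submodule.eq_of_le_of_finrank_le (hSanti m) (le_of_eq hm.symm)
  have hstab : ∀ k, S (m + k) = S m := by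
    intro k
    induction k with
    | zero => rfl
    | succ k ih =>
      have : m + (k + 1) = (m + k) + 1 := by omega
      rw [this, hSmap, ih, ← hSmap, hSm]
  -- the element u and idempotent e
  set u : V := ((L v) ^ (2 * m)) v with hu
  have hLu : L u = (L v) ^ (2 * m + 1) := hLpow (2 * m)
  have humem : u ∈ S m := by
    have : u ∈ S (2 * m) := LinearMap.mem_range_self _ v
    rwa [show 2 * m = m + m by omega, hstab] at this
  have hmapSm : Submodule.map ((L v) ^ (2 * m + 1)) (S m) = S m := by
    have h1 : Submodule.map ((L v) ^ (2 * m + 1)) (S m) = S (3 * m + 1) := by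
      rw [hS]; simp only
      rw [show (3 * m + 1) = (2 * m + 1) + m by omega, pow_add (L v) (2 * m + 1) m,
        Module.End.mul_eq_comp, LinearMap.range_comp]
    rw [h1, show 3 * m + 1 = m + (2 * m + 1) by omega, hstab]
  obtain ⟨e, hemem, heu⟩ : ∃ e ∈ S m, ((L v) ^ (2 * m + 1)) e = u := by
    have : u ∈ Submodule.map ((L v) ^ (2 * m + 1)) (S m) := by rw [hmapSm]; exact humem
    exact this
  have hLue : L u e = u := by rw [hLu]; exact heu
  -- injectivity of L u on S m
  have hrestr : ∀ x ∈ S m, ((L v) ^ (2 * m + 1)) x ∈ S m := by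
    intro x hx
    rw [← hmapSm]
    exact Submodule.mem_map_of_mem hx
  set f := LinearMap.restrict ((L v) ^ (2 * m + 1)) hrestr with hf
  have hfsurj : Function.Surjective f := by
    rintro ⟨y, hy⟩
    rw [← hmapSm] at hy
    obtain ⟨x, hx, hxy⟩ := hy
    exact ⟨⟨x, hx⟩, Subtype.ext hxy⟩
  have hfinj : Function.Injective f := LinearMap.injective_iff_surjective.mpr hfsurj
  -- L e e = e
  have hideal : ∀ a b : V, a ∈ S m → L a b ∈ S m := by
    intro a b ha
    rcases m with _ | m'
    · -- S 0 = ⊤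
      rw [hS]; simp
    · obtain ⟨x, hx⟩ := ha
      rw [← hx, hLpowgen m' x]
      have h2 : ((L v) ^ (m' + 1) * L x) b = ((L v) ^ (m' + 1)) (L x b) := rfl
      rw [h2]
      exact LinearMap.mem_range_self _ _
  have hee : L e e = e := by
    have hd : L e e - e ∈ S m := Submodule.sub_mem _ (hideal e e hemem) hemem
    have hLud : L u (L e e - e) = 0 := by
      have h1 : L u (L e e) = u := by
        calc L u (L e e) = (L u * L e) e := rfl
          _ = L (L u e) e := by rw [← hassoc u e]
          _ = u := by rw [hLue, hLue]
      rw [map_sub, h1, hLue, sub_self]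
    have : f ⟨L e e - e, hd⟩ = f 0 := by
      apply Subtype.ext
      rw [hf]
      simp only [LinearMap.restrict_apply, map_zero]
      rw [← hLu]
      exact hLud
    have := hfinj this
    have := congrArg (Subtype.val) this
    simpa [sub_eq_zero] using this
  -- conclude
  have he0 : e = 0 := hidem e hee
  have hu0 : u = 0 := by rw [← hLue, he0, map_zero]
  have : (L v) ^ (2 * m + 1) = 0 := by rw [← hLu, hu0, hL0]
  exact hpow _ this

theorem stmt {F V : Type*} [Field F] [AddCommGroup V] [Module F V]
    [FiniteDimensional F V] (p : ℕ) [Fact p.Prime] [CharP F p]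
    (T : Subgroup (V ≃ᵃ[F] V))
    (hcomm : ∀ g ∈ T, ∀ h ∈ T, g * h = h * g)
    (hreg : ∀ v : V, ∃! g : V ≃ᵃ[F] V, g ∈ T ∧ g 0 = v) :
    ∃ k : ℕ, ∀ g ∈ T, g ^ (p ^ k) = 1 := by
  classical
  rcases subsingleton_or_nontrivial V with hV | hV
  · refine ⟨0, fun g hg => ?_⟩
    apply AffineEquiv.ext
    intro x
    exact Subsingleton.elim _ _
  have hex : ∀ v : V, ∃ g : V ≃ᵃ[F] V, g ∈ T ∧ g 0 = v := fun v => (hreg v).exists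
  choose ρ hmem h0 using hex
  have huniq : ∀ g ∈ T, ρ (g 0) = g := fun g hg =>
    ((hreg (g 0)).unique ⟨hmem _, h0 _⟩ ⟨hg, rfl⟩)
  set L : V → Module.End F V := fun v => ((ρ v).linear : V →ₗ[F] V) - LinearMap.id with hLdef
  have key : ∀ v w : V, ρ v w = v + w + L v w := by
    intro v w
    have h1 : ρ v (w +ᵥ (0 : V)) = (ρ v).linear w +ᵥ ρ v 0 := (ρ v).map_vadd 0 w
    simp only [vadd_eq_add, add_zero, h0] at h1
    rw [h1, hLdef]
    simp only [LinearMap.sub_apply, LinearMap.id_apply, LinearEquiv.coe_coe]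
    abel
  have hmulpt : ∀ v w x : V, ρ (ρ v w) x = ρ v (ρ w x) := by
    intro v w x
    have h1 : ρ ((ρ v * ρ w) 0) = ρ v * ρ w := huniq _ (mul_mem (hmem v) (hmem w))
    have h2 : (ρ v * ρ w) 0 = ρ v (ρ w 0) := rfl
    rw [h2, h0] at h1
    calc ρ (ρ v w) x = (ρ v * ρ w) x := by rw [h1]
      _ = ρ v (ρ w x) := rfl
  have hcommL : ∀ v w : V, L v w = L w v := by
    intro v w
    have h1 : ρ v w = ρ w v := by
      have h2 := hcomm (ρ v) (hmem v) (ρ w) (hmem w)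
      calc ρ v w = ρ v (ρ w 0) := by rw [h0]
        _ = (ρ v * ρ w) 0 := rfl
        _ = (ρ w * ρ v) 0 := by rw [h2]
        _ = ρ w (ρ v 0) := rfl
        _ = ρ w v := by rw [h0]
    rw [key, key] at h1
    have : w + v + L v w = w + v + L w v := by rw [← h1]; abel
    exact add_left_cancel this
  have haddL : ∀ a b c : V, L (a + b) c = L a c + L b c := by
    intro a b c
    rw [hcommL (a + b) c, map_add, hcommL c a, hcommL c b]
  have hassocpt : ∀ v w x : V, L (L v w) x = L v (L w x) := by
    intro v w x
    have e1 : ρ (ρ v w) x = (v + w + x + L v w + L v x + L w x) + L (L v w) x := by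
      rw [key (ρ v w) x, key v w, haddL, haddL]
      abel
    have e2 : ρ v (ρ w x) = (v + w + x + L v w + L v x + L w x) + L v (L w x) := by
      rw [key v (ρ w x), key w x, map_add, map_add]
      abel
    have := hmulpt v w x
    rw [e1, e2] at this
    exact add_left_cancel this
  have hassocL : ∀ v w : V, L (L v w) = L v * L w := by
    intro v w
    ext x
    rw [Module.End.mul_apply]
    exact hassocpt v w x
  have hquasi : ∀ v : V, ∃ w : V, v + w + L v w = 0 := by
    intro v
    refine ⟨(ρ v)⁻¹ 0, ?_⟩
    have h1 : ρ ((ρ v)⁻¹ 0) = (ρ v)⁻¹ := huniq _ (inv_mem (hmem v))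
    rw [← key]
    calc ρ v ((ρ v)⁻¹ 0) = (ρ v * (ρ v)⁻¹) 0 := rfl
      _ = (1 : V ≃ᵃ[F] V) 0 := by rw [mul_inv_cancel]
      _ = 0 := rfl
  have hnil : ∀ v : V, IsNilpotent (L v) := aux_nilpotent L hcommL hassocL hquasi
  set n := Module.finrank F V with hn
  have hnpos : 0 < n := Module.finrank_pos
  have hnlt : n < p ^ n := Nat.lt_pow_self (Fact.out : p.Prime).one_lt
  refine ⟨n, fun g hg => ?_⟩
  set v := g 0 with hv
  have hgρ : ρ v = g := huniq g hg
  have hit : ∀ M : ℕ, (g ^ M) 0 = (∑ i ∈ Finset.range M, (1 + L v) ^ i) v := by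
    intro M
    induction M with
    | zero => simp
    | succ M ih =>
      have h1 : (g ^ (M + 1)) 0 = g ((g ^ M) 0) := by rw [pow_succ']; rfl
      rw [h1, ih, ← hgρ, key, geom_sum_succ]
      simp only [LinearMap.add_apply, Module.End.mul_apply, Module.End.one_apply]
      abel
  have hsum : (∑ i ∈ Finset.range (p ^ n), (1 + L v) ^ i) = (L v) ^ (p ^ n - 1) := by
    have h1 := congrArg (Polynomial.aeval (L v)) (aux_geom F p n)
    simpa only [map_sum, map_pow, map_add, Polynomial.aeval_X, Polynomial.aeval_one] using h1
  have hLn : (L v) ^ (p ^ n - 1) = 0 := by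
    have h1 : (L v) ^ n = 0 := aux_pow_finrank (hnil v)
    rw [show p ^ n - 1 = (p ^ n - 1 - n) + n by omega, pow_add, h1, mul_zero]
  have hzero : (g ^ (p ^ n)) 0 = 0 := by
    rw [hit, hsum, hLn, LinearMap.zero_apply]
  exact (hreg 0).unique ⟨pow_mem hg _, hzero⟩ ⟨T.one_mem, rfl⟩
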